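/- Let A be an n×n matrix satisfying A𝟙 = -e₁, and write A in block form with Ã the lower-right (n−1)×(n−1) block, so that the first column of A below the diagonal equals −Ã·𝟙̃. If the pair (A, e₁) is controllable, then the pair (Ã, 𝟙̃) is controllable and Ã is invertible implies rank[Ã𝟙̃, Ã²𝟙̃, …, Ã^{n−1}𝟙̃] = n−1. -/

import Mathlib

open Matrix

/-- if A𝟙 = -e₁ (so the first column of A below the diagonal equals
-Ã𝟙̃) and (A,e₁) is controllable, then (Ã,𝟙̃) is controllable, and since Ã is
invertible, [Ã𝟙̃, Ã²𝟙̃, …, Ã^{n}𝟙̃] has full rank n. -/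
theorem mrmt_stmt11 {n : ℕ} (A : Matrix (Fin (n + 1)) (Fin (n + 1)) ℝ)
    (hA1 : A *ᵥ (fun _ => 1) = -(Pi.single 0 1))
    (hcol : ∀ i : Fin n,
      A i.succ 0 = -((A.submatrix Fin.succ Fin.succ) *ᵥ fun _ => (1 : ℝ)) i)
    (hAt : IsUnit (A.submatrix Fin.succ Fin.succ).det)
    (hctrb : (Matrix.of fun i (k : Fin (n + 1)) =>
      ((A ^ (k : ℕ)) *ᵥ Pi.single (0 : Fin (n + 1)) (1 : ℝ)) i).rank = n + 1) :
    (Matrix.of fun i (k : Fin n) =>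
        (((A.submatrix Fin.succ Fin.succ) ^ (k : ℕ)) *ᵥ fun _ => (1 : ℝ)) i).rank = n ∧
      (Matrix.of fun i (k : Fin n) =>
        (((A.submatrix Fin.succ Fin.succ) ^ ((k : ℕ) + 1)) *ᵥ fun _ => (1 : ℝ)) i).rank = n := by
  set At := A.submatrix Fin.succ Fin.succ with hAtdef
  set v : ℕ → Fin n → ℝ := fun j => (At ^ j) *ᵥ (fun _ => (1 : ℝ)) with hv
  -- key step: projecting A *ᵥ w onto the last n coordinates
  have key : ∀ w : Fin (n + 1) → ℝ, (fun i : Fin n => (A *ᵥ w) i.succ)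
      = At *ᵥ (fun i => w i.succ) - w 0 • (At *ᵥ fun _ => (1 : ℝ)) := by
    intro w
    funext i
    have h0 : (A *ᵥ w) i.succ
        = A i.succ 0 * w 0 + ∑ j : Fin n, A i.succ j.succ * w j.succ := by
      simp [mulVec, dotProduct, Fin.sum_univ_succ]
    rw [h0, hcol i]
    simp only [Pi.sub_apply, Pi.smul_apply, smul_eq_mul, mulVec, dotProduct,
      submatrix_apply, hAtdef]
    ring
  -- v (j+1) = At *ᵥ v j
  have hvstep : ∀ j : ℕ, At *ᵥ v j = v (j + 1) := by
    intro j
    simp [hv, pow_succ', mulVec_mulVec]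
  -- induction claim
  have ind : ∀ k : ℕ, (fun i : Fin n => ((A ^ k) *ᵥ Pi.single (0 : Fin (n+1)) (1:ℝ)) i.succ)
      ∈ Submodule.span ℝ (v '' Set.Icc 1 k) := by
    intro k
    induction k with
    | zero =>
        have : (fun i : Fin n => ((A ^ 0) *ᵥ Pi.single (0 : Fin (n+1)) (1:ℝ)) i.succ)
            = 0 := by
          funext i
          simp [Pi.single_eq_of_ne (Fin.succ_ne_zero i),
            Matrix.one_apply_ne (Fin.succ_ne_zero i)]
        rw [this]
        exact Submodule.zero_mem _
    | succ k ih =>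
        have hpow : (A ^ (k+1)) *ᵥ Pi.single (0 : Fin (n+1)) (1:ℝ)
            = A *ᵥ ((A ^ k) *ᵥ Pi.single (0 : Fin (n+1)) (1:ℝ)) := by
          rw [pow_succ', mulVec_mulVec]
        rw [hpow, key]
        refine Submodule.sub_mem _ ?_ ?_
        · have hmap : At *ᵥ (fun i => ((A ^ k) *ᵥ Pi.single (0 : Fin (n+1)) (1:ℝ)) i.succ)
              ∈ Submodule.map At.mulVecLin (Submodule.span ℝ (v '' Set.Icc 1 k)) :=
            Submodule.mem_map_of_mem ih
          rw [Submodule.map_span] at hmap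
          refine Submodule.span_mono ?_ hmap
          rintro x ⟨y, ⟨j, hj, rfl⟩, rfl⟩
          obtain ⟨hj1, hj2⟩ := hj
          refine ⟨j + 1, ⟨by omega, by omega⟩, ?_⟩
          simp [mulVecLin_apply, hvstep]
        · refine Submodule.smul_mem _ _ (Submodule.subset_span ?_)
          exact ⟨1, ⟨le_refl 1, by omega⟩, (hvstep 0).symm.trans (by simp [hv])⟩
  -- big controllability matrix has full range
  have hMtop : LinearMap.range (Matrix.of fun i (k : Fin (n + 1)) =>
      ((A ^ (k : ℕ)) *ᵥ Pi.single (0 : Fin (n + 1)) (1 : ℝ)) i).mulVecLin = ⊤ := by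
    apply Submodule.eq_top_of_finrank_eq
    rw [Module.finrank_fin_fun]
    exact hctrb
  -- range of the shifted small controllability matrix is everything
  set M2 : Matrix (Fin n) (Fin n) ℝ :=
    Matrix.of fun i (k : Fin n) => ((At ^ ((k : ℕ) + 1)) *ᵥ fun _ => (1 : ℝ)) i with hM2
  have hspan_le : Submodule.span ℝ (v '' Set.Icc 1 n) ≤ LinearMap.range M2.mulVecLin := by
    rw [Submodule.span_le]
    rintro x ⟨j, hj, rfl⟩
    obtain ⟨hj1, hj2⟩ := hj
    refine ⟨Pi.single (⟨j - 1, by omega⟩ : Fin n) 1, ?_⟩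
    rw [mulVecLin_apply, mulVec_single]
    funext i
    have : j - 1 + 1 = j := by omega
    simp [hM2, hv, this]
  have hR2top : LinearMap.range M2.mulVecLin = ⊤ := by
    rw [eq_top_iff]
    intro b _
    obtain ⟨c, hc⟩ := (LinearMap.range_eq_top.1 hMtop) (Fin.cons 0 b)
    have hb : b = fun i : Fin n => ((Matrix.of fun i (k : Fin (n + 1)) =>
        ((A ^ (k : ℕ)) *ᵥ Pi.single (0 : Fin (n + 1)) (1 : ℝ)) i) *ᵥ c) i.succ := by
      funext i
      rw [show ((Matrix.of fun i (k : Fin (n + 1)) =>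
        ((A ^ (k : ℕ)) *ᵥ Pi.single (0 : Fin (n + 1)) (1 : ℝ)) i) *ᵥ c) = Fin.cons 0 b from hc]
      simp
    have hsum : (fun i : Fin n => ((Matrix.of fun i (k : Fin (n + 1)) =>
        ((A ^ (k : ℕ)) *ᵥ Pi.single (0 : Fin (n + 1)) (1 : ℝ)) i) *ᵥ c) i.succ)
        = ∑ k : Fin (n+1), c k •
          (fun i : Fin n => ((A ^ (k : ℕ)) *ᵥ Pi.single (0 : Fin (n+1)) (1:ℝ)) i.succ) := by
      funext i
      simp only [mulVec, dotProduct, of_apply, Finset.sum_apply, Pi.smul_apply, smul_eq_mul]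
      exact Finset.sum_congr rfl fun k _ => mul_comm _ _
    rw [hb, hsum]
    apply hspan_le
    refine Submodule.sum_mem _ fun k _ => Submodule.smul_mem _ _ ?_
    refine Submodule.span_mono (Set.image_mono ?_) (ind (k : ℕ))
    exact Set.Icc_subset_Icc_right (by omega)
  have hrank2 : M2.rank = n := by
    show Module.finrank ℝ (LinearMap.range M2.mulVecLin) = n
    rw [hR2top, finrank_top, Module.finrank_fin_fun]
  set M1 : Matrix (Fin n) (Fin n) ℝ :=
    Matrix.of fun i (k : Fin n) => ((At ^ (k : ℕ)) *ᵥ fun _ => (1 : ℝ)) i with hM1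
  have hfact : M2 = At * M1 := by
    ext i k
    rw [Matrix.mul_apply]
    show ((At ^ ((k : ℕ) + 1)) *ᵥ fun _ => (1:ℝ)) i = _
    rw [pow_succ', ← mulVec_mulVec]
    simp [hM1, mulVec, dotProduct]
  have hrank1 : M1.rank = n := by
    refine le_antisymm (M1.rank_le_card_width.trans (Fintype.card_fin n).le) ?_
    calc n = M2.rank := hrank2.symm
    _ ≤ M1.rank := by rw [hfact]; exact rank_mul_le_right _ _
  exact ⟨hrank1, hrank2⟩
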